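/- arXiv:1407.0536 — 4 statements merged into one kernel-verified Lean document; each statement's English description precedes it below -/
import Mathlib

section
/- Let X_M and X_F be independent with densities f_{X_v}(x) = 2πλ_v x e^{-πλ_v x²} for v ∈ {M,F}, and let P_M > P_F > 0 and α > 2. Then P(P_M X_M^{-α} > P_F X_F^{-α} and X_M^{-α} ≤ X_F^{-α}) = λ_F/(λ_F + λ_M) − λ_F/(λ_F + (P_M/P_F)^{2/α} λ_M). -/
open MeasureTheory Real Set

lemma hderiv_aux (l x : ℝ) :
    HasDerivAt (fun t : ℝ => -Real.exp (-(l * t ^ 2))) (2 * l * x * Real.exp (-(l * x ^ 2))) x := by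
  have h1 : HasDerivAt (fun t : ℝ => -(l * t ^ 2)) (-(l * (2 * x))) x := by
    exact ((hasDerivAt_pow 2 x).const_mul l).neg.congr_deriv (by norm_num)
  have := (h1.exp).neg
  exact this.congr_deriv (by ring)

lemma key_int {a : ℝ} (ha : 0 < a) :
    ∫ x in Ioi (0:ℝ), x * Real.exp (-(a * x ^ 2)) = 1 / (2 * a) := by
  have hint : IntegrableOn (fun x : ℝ => x * Real.exp (-(a * x ^ 2))) (Ioi 0) := by
    have := integrable_mul_exp_neg_mul_sq ha
    simpa [neg_mul] using this.integrableOn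
  have hF : ∀ x ∈ Ici (0:ℝ), HasDerivAt (fun t : ℝ => -Real.exp (-(a * t ^ 2)) / (2 * a))
      (x * Real.exp (-(a * x ^ 2))) x := by
    intro x _
    have := (hderiv_aux a x).div_const (2 * a)
    exact this.congr_deriv (by field_simp)
  have htend : Filter.Tendsto (fun t : ℝ => -Real.exp (-(a * t ^ 2)) / (2 * a))
      Filter.atTop (nhds 0) := by
    have h1 : Filter.Tendsto (fun t : ℝ => -(a * t ^ 2)) Filter.atTop Filter.atBot := by
      apply Filter.tendsto_neg_atBot_iff.mpr
      exact (Filter.tendsto_pow_atTop (by norm_num)).const_mul_atTop ha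
    have := (Real.tendsto_exp_atBot.comp h1).neg.div_const (2 * a)
    simpa using this
  have := integral_Ioi_of_hasDerivAt_of_tendsto' (fun x hx => hF x hx) hint htend
  rw [this]
  simp
  ring

lemma ioc_int {l : ℝ} (hl : 0 < l) {u v : ℝ} (huv : u ≤ v) :
    ∫ x in Ioc u v, 2 * π * l * x * Real.exp (-(π * l * x ^ 2))
      = Real.exp (-(π * l * u ^ 2)) - Real.exp (-(π * l * v ^ 2)) := by
  have hpl : 0 < π * l := mul_pos Real.pi_pos hl
  have hF : ∀ x ∈ uIcc u v, HasDerivAt (fun t : ℝ => -Real.exp (-(π * l * t ^ 2)))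
      (2 * π * l * x * Real.exp (-(π * l * x ^ 2))) x := by
    intro x _
    have := hderiv_aux (π * l) x
    convert this using 1
    ring
  have hint : IntervalIntegrable (fun x => 2 * π * l * x * Real.exp (-(π * l * x ^ 2)))
      volume u v := by
    apply Continuous.intervalIntegrable
    continuity
  have := intervalIntegral.integral_eq_sub_of_hasDerivAt (fun x hx => hF x hx) hint
  rw [← intervalIntegral.integral_of_le huv, this]
  ring

lemma fM_integrable {l : ℝ} (hl : 0 < l) :
    Integrable (fun x : ℝ => 2 * π * l * x * Real.exp (-(π * l * x ^ 2))) := by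
  have hpl : 0 < π * l := mul_pos Real.pi_pos hl
  have := (integrable_mul_exp_neg_mul_sq hpl).const_mul (2 * π * l)
  convert this using 2 with x
  ring_nf

lemma density_map {Ω : Type*} [MeasurableSpace Ω] (μ : Measure Ω) (X : Ω → ℝ)
    (hX : Measurable X) {l : ℝ} (hl : 0 < l)
    (hd : ∀ s : Set ℝ, MeasurableSet s →
      μ (X ⁻¹' s) = ENNReal.ofReal
        (∫ x in s ∩ Ici 0, 2 * π * l * x * Real.exp (-(π * l * x ^ 2)))) :
    μ.map X = volume.withDensity
      ((Ici 0).indicator fun x => ENNReal.ofReal (2 * π * l * x * Real.exp (-(π * l * x ^ 2)))) := by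
  refine Measure.ext fun s hs => ?_
  rw [Measure.map_apply hX hs, hd s hs, withDensity_apply _ hs]
  rw [lintegral_indicator measurableSet_Ici _]
  rw [Measure.restrict_restrict measurableSet_Ici, inter_comm]
  refine ofReal_integral_eq_lintegral_ofReal ((fM_integrable hl).integrableOn) ?_
  filter_upwards [ae_restrict_mem (measurableSet_Ici.inter hs)] with x hx
  exact mul_nonneg (mul_nonneg (by positivity) hx.1) (Real.exp_nonneg _)

lemma sec_eq {PM PF α x : ℝ} (hPF : 0 < PF) (hPM : PF < PM) (hα : 2 < α) (hx : 0 < x) :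
    {y : ℝ | PF * y ^ (-α) < PM * x ^ (-α) ∧ x ^ (-α) ≤ y ^ (-α)} ∩ Ici 0
      = Ioc ((PF / PM) ^ α⁻¹ * x) x := by
  set b : ℝ := (PF / PM) ^ α⁻¹ with hb
  have hα0 : (0 : ℝ) < α := by linarith
  have hnα : -α < 0 := by linarith
  have hr : (0 : ℝ) < PF / PM := div_pos hPF (hPF.trans hPM)
  have hb0 : 0 < b := Real.rpow_pos_of_pos hr _
  have hbx0 : 0 < b * x := mul_pos hb0 hx
  have hkey : PF * (b * x) ^ (-α) = PM * x ^ (-α) := by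
    have h1 : (b * x) ^ (-α) = b ^ (-α) * x ^ (-α) := Real.mul_rpow hb0.le hx.le
    have h2 : b ^ (-α) = PM / PF := by
      rw [hb, ← Real.rpow_mul hr.le]
      rw [show α⁻¹ * -α = -1 by field_simp]
      rw [Real.rpow_neg_one, inv_div]
    rw [h1, h2]
    field_simp
  ext y
  simp only [mem_inter_iff, mem_setOf_eq, mem_Ici, mem_Ioc]
  constructor
  · rintro ⟨⟨h1, h2⟩, hy0⟩
    have hy : 0 < y := by
      rcases hy0.lt_or_eq with h | h
      · exact h
      · exfalso
        rw [← h, Real.zero_rpow hnα.ne] at h2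
        exact absurd h2 (not_le.mpr (Real.rpow_pos_of_pos hx _))
    refine ⟨?_, (Real.rpow_le_rpow_iff_of_neg hx hy hnα).mp h2⟩
    rw [← hkey] at h1
    have := (mul_lt_mul_iff_right₀ hPF).mp h1
    exact (Real.rpow_lt_rpow_iff_of_neg hy hbx0 hnα).mp this
  · rintro ⟨h1, h2⟩
    have hy : 0 < y := hbx0.trans h1
    refine ⟨⟨?_, (Real.rpow_le_rpow_iff_of_neg hx hy hnα).mpr h2⟩, hy.le⟩
    rw [← hkey]
    exact (mul_lt_mul_iff_right₀ hPF).mpr ((Real.rpow_lt_rpow_iff_of_neg hy hbx0 hnα).mpr h1)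

set_option maxHeartbeats 1000000 in
theorem stmt_1 {Ω : Type*} [MeasurableSpace Ω] (μ : Measure Ω) [IsProbabilityMeasure μ]
    (XM XF : Ω → ℝ) (hXM : Measurable XM) (hXF : Measurable XF)
    (lM lF : ℝ) (hlM : 0 < lM) (hlF : 0 < lF)
    (hind : ProbabilityTheory.IndepFun XM XF μ)
    (hdM : ∀ s : Set ℝ, MeasurableSet s →
      μ (XM ⁻¹' s) = ENNReal.ofReal
        (∫ x in s ∩ Ici 0, 2 * π * lM * x * Real.exp (-(π * lM * x ^ 2))))
    (hdF : ∀ s : Set ℝ, MeasurableSet s →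
      μ (XF ⁻¹' s) = ENNReal.ofReal
        (∫ x in s ∩ Ici 0, 2 * π * lF * x * Real.exp (-(π * lF * x ^ 2))))
    (PM PF α : ℝ) (hPF : 0 < PF) (hPM : PF < PM) (hα : 2 < α) :
    μ {ω | PM * XM ω ^ (-α) > PF * XF ω ^ (-α) ∧ XM ω ^ (-α) ≤ XF ω ^ (-α)} =
      ENNReal.ofReal (lF / (lF + lM) - lF / (lF + (PM / PF) ^ (2 / α) * lM)) := by
  set b : ℝ := (PF / PM) ^ α⁻¹ with hb
  have hα0 : (0 : ℝ) < α := by linarith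
  have hr : (0 : ℝ) < PF / PM := div_pos hPF (hPF.trans hPM)
  have hb0 : 0 < b := Real.rpow_pos_of_pos hr _
  have hb1 : b < 1 := Real.rpow_lt_one hr.le ((div_lt_one (hPF.trans hPM)).mpr hPM)
    (by positivity)
  have hrpow : Measurable fun t : ℝ => t ^ (-α) := by measurability
  set S : Set (ℝ × ℝ) :=
    {p : ℝ × ℝ | PF * p.2 ^ (-α) < PM * p.1 ^ (-α) ∧ p.1 ^ (-α) ≤ p.2 ^ (-α)} with hSdef
  have hS : MeasurableSet S :=
    (measurableSet_lt ((hrpow.comp measurable_snd).const_mul PF)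
        ((hrpow.comp measurable_fst).const_mul PM)).inter
      (measurableSet_le (hrpow.comp measurable_fst) (hrpow.comp measurable_snd))
  have hevent : {ω | PM * XM ω ^ (-α) > PF * XF ω ^ (-α) ∧ XM ω ^ (-α) ≤ XF ω ^ (-α)}
      = (fun ω => (XM ω, XF ω)) ⁻¹' S := rfl
  rw [hevent, ← Measure.map_apply (hXM.prodMk hXF) hS]
  rw [(ProbabilityTheory.indepFun_iff_map_prod_eq_prod_map_map hXM.aemeasurable
    hXF.aemeasurable).mp hind]
  haveI : IsProbabilityMeasure (μ.map XM) := Measure.isProbabilityMeasure_map hXM.aemeasurable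
  haveI : IsProbabilityMeasure (μ.map XF) := Measure.isProbabilityMeasure_map hXF.aemeasurable
  rw [Measure.prod_apply hS]
  -- section values
  have hsec : ∀ x : ℝ, 0 < x → (μ.map XF) (Prod.mk x ⁻¹' S)
      = ENNReal.ofReal (Real.exp (-(π * lF * (b * x) ^ 2)) - Real.exp (-(π * lF * x ^ 2))) := by
    intro x hx
    have hsecm : MeasurableSet (Prod.mk x ⁻¹' S) := measurable_prodMk_left hS
    rw [Measure.map_apply hXF hsecm, hdF _ hsecm]
    have hseceq : (Prod.mk x ⁻¹' S) ∩ Ici 0 = Ioc (b * x) x := sec_eq hPF hPM hα hx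
    rw [hseceq, ioc_int hlF (by nlinarith : b * x ≤ x)]
  have h0 : (μ.map XM) (Iic 0) = 0 := by
    rw [Measure.map_apply hXM measurableSet_Iic, hdM _ measurableSet_Iic]
    have h01 : Iic (0:ℝ) ∩ Ici 0 = {0} := by
      ext t
      simp [le_antisymm_iff, and_comm]
    rw [h01]
    simp [Measure.restrict_singleton]
  have hae : ∀ᵐ x ∂(μ.map XM), (μ.map XF) (Prod.mk x ⁻¹' S)
      = ENNReal.ofReal (Real.exp (-(π * lF * (b * x) ^ 2)) - Real.exp (-(π * lF * x ^ 2))) := by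
    rw [Filter.eventually_iff, mem_ae_iff]
    refine measure_mono_null (fun x hx => ?_) h0
    simp only [mem_compl_iff, mem_setOf_eq] at hx
    by_contra hx0
    simp only [mem_Iic, not_le] at hx0
    exact hx (hsec x hx0)
  rw [lintegral_congr_ae hae]
  rw [density_map μ XM hXM hlM hdM]
  have hgM : Measurable ((Ici (0:ℝ)).indicator
      fun x => ENNReal.ofReal (2 * π * lM * x * Real.exp (-(π * lM * x ^ 2)))) := by
    have hc : Continuous fun x : ℝ => 2 * π * lM * x * Real.exp (-(π * lM * x ^ 2)) := by
      continuity
    exact (hc.measurable.ennreal_ofReal).indicator measurableSet_Ici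
  have hG : Measurable fun x : ℝ =>
      ENNReal.ofReal (Real.exp (-(π * lF * (b * x) ^ 2)) - Real.exp (-(π * lF * x ^ 2))) := by
    have hc : Continuous fun x : ℝ =>
        Real.exp (-(π * lF * (b * x) ^ 2)) - Real.exp (-(π * lF * x ^ 2)) := by continuity
    exact hc.measurable.ennreal_ofReal
  rw [lintegral_withDensity_eq_lintegral_mul volume hgM hG]
  -- rewrite the integrand as an indicator
  have hind2 : ∀ x : ℝ, ((Ici (0:ℝ)).indicator
        (fun x => ENNReal.ofReal (2 * π * lM * x * Real.exp (-(π * lM * x ^ 2)))) *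
        fun x => ENNReal.ofReal (Real.exp (-(π * lF * (b * x) ^ 2)) - Real.exp (-(π * lF * x ^ 2)))) x
      = (Ici (0:ℝ)).indicator (fun x => ENNReal.ofReal
          ((2 * π * lM * x * Real.exp (-(π * lM * x ^ 2))) *
            (Real.exp (-(π * lF * (b * x) ^ 2)) - Real.exp (-(π * lF * x ^ 2))))) x := by
    intro x
    simp only [Pi.mul_apply, indicator_apply]
    split_ifs with hx
    · rw [← ENNReal.ofReal_mul]
      exact mul_nonneg (mul_nonneg (by positivity) hx) (Real.exp_nonneg _)
    · simp
  rw [lintegral_congr hind2, lintegral_indicator measurableSet_Ici _]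
  -- convert to a real integral
  set a1 : ℝ := π * (lM + lF * b ^ 2) with ha1
  set a2 : ℝ := π * (lM + lF) with ha2
  have ha1p : 0 < a1 := by positivity
  have ha2p : 0 < a2 := by positivity
  have hpt : ∀ x : ℝ, (2 * π * lM * x * Real.exp (-(π * lM * x ^ 2))) *
        (Real.exp (-(π * lF * (b * x) ^ 2)) - Real.exp (-(π * lF * x ^ 2)))
      = 2 * π * lM * (x * Real.exp (-(a1 * x ^ 2)))
        - 2 * π * lM * (x * Real.exp (-(a2 * x ^ 2))) := by
    intro x
    rw [show -(a1 * x ^ 2) = -(π * lM * x ^ 2) + -(π * lF * (b * x) ^ 2) by rw [ha1]; ring,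
      show -(a2 * x ^ 2) = -(π * lM * x ^ 2) + -(π * lF * x ^ 2) by rw [ha2]; ring,
      Real.exp_add, Real.exp_add]
    ring
  have hint1 : Integrable (fun x : ℝ => 2 * π * lM * (x * Real.exp (-(a1 * x ^ 2)))) := by
    have := (integrable_mul_exp_neg_mul_sq ha1p).const_mul (2 * π * lM)
    simpa [neg_mul] using this
  have hint2 : Integrable (fun x : ℝ => 2 * π * lM * (x * Real.exp (-(a2 * x ^ 2)))) := by
    have := (integrable_mul_exp_neg_mul_sq ha2p).const_mul (2 * π * lM)
    simpa [neg_mul] using this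
  have hprodint : Integrable (fun x : ℝ => (2 * π * lM * x * Real.exp (-(π * lM * x ^ 2))) *
      (Real.exp (-(π * lF * (b * x) ^ 2)) - Real.exp (-(π * lF * x ^ 2)))) := by
    have := hint1.sub hint2
    refine this.congr ?_
    exact ae_of_all _ fun x => (hpt x).symm
  have hofReal : ∫⁻ x in Ici (0:ℝ), ENNReal.ofReal
        ((2 * π * lM * x * Real.exp (-(π * lM * x ^ 2))) *
          (Real.exp (-(π * lF * (b * x) ^ 2)) - Real.exp (-(π * lF * x ^ 2))))
      = ENNReal.ofReal (∫ x in Ici (0:ℝ),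
          (2 * π * lM * x * Real.exp (-(π * lM * x ^ 2))) *
          (Real.exp (-(π * lF * (b * x) ^ 2)) - Real.exp (-(π * lF * x ^ 2)))) := by
    refine (ofReal_integral_eq_lintegral_ofReal hprodint.integrableOn ?_).symm
    filter_upwards [ae_restrict_mem measurableSet_Ici] with x hx
    have hx0 : (0:ℝ) ≤ x := mem_Ici.mp hx
    have hb2le : b ^ 2 ≤ 1 := by nlinarith
    have hbx : (b * x) ^ 2 ≤ x ^ 2 := by
      calc (b * x) ^ 2 = b ^ 2 * x ^ 2 := by ring
        _ ≤ 1 * x ^ 2 := mul_le_mul_of_nonneg_right hb2le (sq_nonneg x)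
        _ = x ^ 2 := one_mul _
    have hle : Real.exp (-(π * lF * x ^ 2)) ≤ Real.exp (-(π * lF * (b * x) ^ 2)) := by
      apply Real.exp_le_exp.mpr
      have := mul_le_mul_of_nonneg_left hbx (by positivity : (0:ℝ) ≤ π * lF)
      linarith
    have h1 : 0 ≤ 2 * π * lM * x * Real.exp (-(π * lM * x ^ 2)) :=
      mul_nonneg (mul_nonneg (by positivity) hx0) (Real.exp_nonneg _)
    simpa using mul_nonneg h1 (sub_nonneg.mpr hle)
  rw [hofReal]
  -- compute the real integral
  have hval : ∫ x in Ici (0:ℝ),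
        (2 * π * lM * x * Real.exp (-(π * lM * x ^ 2))) *
        (Real.exp (-(π * lF * (b * x) ^ 2)) - Real.exp (-(π * lF * x ^ 2)))
      = lM / (lM + lF * b ^ 2) - lM / (lM + lF) := by
    rw [integral_Ici_eq_integral_Ioi]
    have : ∀ x : ℝ, (2 * π * lM * x * Real.exp (-(π * lM * x ^ 2))) *
        (Real.exp (-(π * lF * (b * x) ^ 2)) - Real.exp (-(π * lF * x ^ 2)))
      = 2 * π * lM * (x * Real.exp (-(a1 * x ^ 2)))
        - 2 * π * lM * (x * Real.exp (-(a2 * x ^ 2))) := hpt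
    rw [integral_congr_ae (ae_of_all _ fun x => by
      show _ = (fun x : ℝ => 2 * π * lM * (x * Real.exp (-(a1 * x ^ 2)))
        - 2 * π * lM * (x * Real.exp (-(a2 * x ^ 2)))) x
      exact hpt x)]
    rw [integral_sub hint1.integrableOn hint2.integrableOn,
      integral_const_mul, integral_const_mul, key_int ha1p, key_int ha2p, ha1, ha2]
    have hπ : π ≠ 0 := Real.pi_ne_zero
    have hd1 : lM + lF * b ^ 2 > 0 := by positivity
    have hd2 : lM + lF > 0 := by positivity
    field_simp
  rw [hval]
  -- final algebraic identity
  congr 1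
  have hb2 : b ^ 2 = (PF / PM) ^ (2 / α) := by
    rw [hb, ← Real.rpow_natCast ((PF / PM) ^ α⁻¹) 2, ← Real.rpow_mul hr.le]
    congr 1
    push_cast
    field_simp
  have hPM0 : (0:ℝ) < PM := hPF.trans hPM
  have hc : (PM / PF) ^ ((2:ℝ) / α) * b ^ 2 = 1 := by
    rw [hb2, ← Real.mul_rpow (div_pos hPM0 hPF).le hr.le,
      show PM / PF * (PF / PM) = 1 by
        rw [div_mul_div_comm, mul_comm PM PF]
        exact div_self (by positivity), Real.one_rpow]
  have hcpos : (0:ℝ) < (PM / PF) ^ ((2:ℝ) / α) := Real.rpow_pos_of_pos (by positivity) _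
  set c : ℝ := (PM / PF) ^ ((2:ℝ) / α) with hcdef
  have hd1 : lM + lF * b ^ 2 > 0 := by positivity
  have hd2 : lM + lF > 0 := by positivity
  have hd3 : lF + c * lM > 0 := by positivity
  have hbc : b ^ 2 = c⁻¹ := by
    field_simp at hc ⊢
    linarith [hc]
  rw [hbc]
  have hcne : c ≠ 0 := ne_of_gt hcpos
  field_simp
  ring
end

section
/- Let X_M and X_F be independent with densities f_{X_v}(x) = 2πλ_v x e^{-πλ_v x²} for v ∈ {M,F}, P_M > P_F > 0, α > 2. Then P(X_F^{-α} ≥ (P_M/P_F) X_M^{-α}) = λ_F/(λ_F + (P_M/P_F)^{2/α} λ_M). -/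
open MeasureTheory Real Set

lemma aux_deriv (b x : ℝ) :
    HasDerivAt (fun y => -Real.exp (-(b * y ^ 2))) (2 * b * x * Real.exp (-(b * x ^ 2))) x := by
  have h : HasDerivAt (fun y : ℝ => -(b * y ^ 2)) (-(b * (2 * x))) x := by
    have h0 : HasDerivAt (fun y : ℝ => y ^ 2) (2 * x) x := by simpa using hasDerivAt_pow 2 x
    exact (h0.const_mul b).neg
  have : HasDerivAt (fun y => -Real.exp (-(b * y ^ 2))) (-(Real.exp (-(b * x ^ 2)) * -(b * (2 * x)))) x :=
    (h.exp).neg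
  convert this using 1
  ring

lemma aux_tendsto {b : ℝ} (hb : 0 < b) :
    Filter.Tendsto (fun y => -Real.exp (-(b * y ^ 2))) Filter.atTop (nhds 0) := by
  rw [show (0:ℝ) = -0 by ring]
  apply Filter.Tendsto.neg
  apply Real.tendsto_exp_atBot.comp
  have h1 : Filter.Tendsto (fun y : ℝ => b * y ^ 2) Filter.atTop Filter.atTop :=
    (Filter.tendsto_pow_atTop two_ne_zero).const_mul_atTop hb
  simpa using Filter.tendsto_neg_atBot_iff.2 h1

lemma aux_intOn {b : ℝ} (hb : 0 < b) :
    IntegrableOn (fun x => 2 * b * x * Real.exp (-(b * x ^ 2))) (Ioi 0) := by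
  apply integrableOn_Ioi_deriv_of_nonneg' (g := fun y => -Real.exp (-(b * y ^ 2)))
    (fun x _ => aux_deriv b x) (fun x hx => ?_) (aux_tendsto hb)
  have : (0:ℝ) < x := hx
  positivity

lemma aux_intIoi {b : ℝ} (hb : 0 < b) :
    ∫ x in Ioi 0, 2 * b * x * Real.exp (-(b * x ^ 2)) = 1 := by
  rw [integral_Ioi_of_hasDerivAt_of_tendsto' (fun x _ => aux_deriv b x) (aux_intOn hb)
    (aux_tendsto hb)]
  simp

lemma aux_intIoc (b : ℝ) {t : ℝ} (ht : 0 ≤ t) :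
    ∫ x in Ioc 0 t, 2 * b * x * Real.exp (-(b * x ^ 2)) = 1 - Real.exp (-(b * t ^ 2)) := by
  rw [← intervalIntegral.integral_of_le ht]
  rw [intervalIntegral.integral_eq_sub_of_hasDerivAt (fun x _ => aux_deriv b x)]
  · simp
    ring
  · apply Continuous.intervalIntegrable
    continuity

/-- exact-form versions with `2 * π * l * x * exp (-(π * l * x ^ 2))` -/
lemma auxf_eq (l : ℝ) : (fun x : ℝ => 2 * π * l * x * Real.exp (-(π * l * x ^ 2)))
    = fun x => 2 * (π * l) * x * Real.exp (-(π * l * x ^ 2)) := by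
  funext x; ring_nf

lemma auxf_intOn {l : ℝ} (hl : 0 < l) :
    IntegrableOn (fun x : ℝ => 2 * π * l * x * Real.exp (-(π * l * x ^ 2))) (Ioi 0) := by
  rw [auxf_eq]; exact aux_intOn (by positivity)

lemma auxf_intIoi {l : ℝ} (hl : 0 < l) :
    ∫ x in Ioi 0, 2 * π * l * x * Real.exp (-(π * l * x ^ 2)) = 1 := by
  rw [auxf_eq]; exact aux_intIoi (by positivity)

lemma auxf_intIoc (l : ℝ) {t : ℝ} (ht : 0 ≤ t) :
    ∫ x in Ioc 0 t, 2 * π * l * x * Real.exp (-(π * l * x ^ 2))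
      = 1 - Real.exp (-(π * l * t ^ 2)) := by
  rw [auxf_eq]; exact aux_intIoc _ ht

lemma auxf_meas (l : ℝ) :
    Measurable (fun x : ℝ => 2 * π * l * x * Real.exp (-(π * l * x ^ 2))) :=
  Continuous.measurable (by continuity)

lemma aux_cont2 (a b : ℝ) : Continuous fun x : ℝ => 1 - Real.exp (-(a * (b * x) ^ 2)) := by
  have h : Continuous fun x : ℝ => -(a * (b * x) ^ 2) := by continuity
  exact continuous_const.sub (Real.continuous_exp.comp h)

/-- the law of a variable with the given density is `withDensity`. -/
lemma law_eq {Ω : Type*} [MeasurableSpace Ω] (μ : Measure Ω) [IsProbabilityMeasure μ]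
    (X : Ω → ℝ) (hX : Measurable X) {l : ℝ} (hl : 0 < l)
    (hd : ∀ s : Set ℝ, MeasurableSet s →
      μ (X ⁻¹' s) = ENNReal.ofReal
        (∫ x in s ∩ Ici 0, 2 * π * l * x * Real.exp (-(π * l * x ^ 2)))) :
    Measure.map X μ = MeasureTheory.volume.withDensity
      (fun x => ENNReal.ofReal ((Ioi (0:ℝ)).indicator
        (fun x => 2 * π * l * x * Real.exp (-(π * l * x ^ 2))) x)) := by
  set f : ℝ → ℝ := fun x => 2 * π * l * x * Real.exp (-(π * l * x ^ 2)) with hf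
  ext s hs
  rw [Measure.map_apply hX hs, hd s hs, withDensity_apply _ hs]
  have hint : (s ∩ Ici 0 : Set ℝ) =ᵐ[MeasureTheory.volume] (s ∩ Ioi (0:ℝ) : Set ℝ) :=
    ae_eq_set_inter (Filter.EventuallyEq.refl _ _) MeasureTheory.Ioi_ae_eq_Ici.symm
  rw [setIntegral_congr_set hint]
  have h1 : ∀ x, ENNReal.ofReal ((Ioi (0:ℝ)).indicator f x)
      = (Ioi (0:ℝ)).indicator (fun x => ENNReal.ofReal (f x)) x := by
    intro x
    by_cases hx : x ∈ Ioi (0:ℝ) <;> simp [hx]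
  simp_rw [h1]
  rw [lintegral_indicator measurableSet_Ioi, Measure.restrict_restrict measurableSet_Ioi,
    show Ioi (0:ℝ) ∩ s = s ∩ Ioi 0 from inter_comm _ _]
  rw [← ofReal_integral_eq_lintegral_ofReal]
  · exact (auxf_intOn hl).mono_set inter_subset_right
  · filter_upwards [ae_restrict_mem (hs.inter measurableSet_Ioi)] with x hx
    have : (0:ℝ) < x := hx.2
    positivity

theorem stmt_2 {Ω : Type*} [MeasurableSpace Ω] (μ : Measure Ω) [IsProbabilityMeasure μ]
    (XM XF : Ω → ℝ) (hXM : Measurable XM) (hXF : Measurable XF)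
    (lM lF : ℝ) (hlM : 0 < lM) (hlF : 0 < lF)
    (hind : ProbabilityTheory.IndepFun XM XF μ)
    (hdM : ∀ s : Set ℝ, MeasurableSet s →
      μ (XM ⁻¹' s) = ENNReal.ofReal
        (∫ x in s ∩ Ici 0, 2 * π * lM * x * Real.exp (-(π * lM * x ^ 2))))
    (hdF : ∀ s : Set ℝ, MeasurableSet s →
      μ (XF ⁻¹' s) = ENNReal.ofReal
        (∫ x in s ∩ Ici 0, 2 * π * lF * x * Real.exp (-(π * lF * x ^ 2))))
    (PM PF α : ℝ) (hPF : 0 < PF) (hPM : PF < PM) (hα : 2 < α) :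
    μ {ω | XF ω ^ (-α) ≥ (PM / PF) * XM ω ^ (-α)} =
      ENNReal.ofReal (lF / (lF + (PM / PF) ^ (2 / α) * lM)) := by
  have hα0 : (0:ℝ) < α := by linarith
  set c : ℝ := PM / PF with hc
  have hc1 : 1 < c := (one_lt_div hPF).2 hPM
  have hc0 : 0 < c := by linarith
  set k : ℝ := c ^ (-α⁻¹) with hk
  have hk0 : 0 < k := Real.rpow_pos_of_pos hc0 _
  -- a.e. positivity
  have haeM : ∀ᵐ ω ∂μ, 0 < XM ω := by
    rw [ae_iff]
    have : {ω | ¬ 0 < XM ω} = XM ⁻¹' (Iic 0) := by ext ω; simp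
    rw [this, hdM _ measurableSet_Iic]
    have : Iic (0:ℝ) ∩ Ici 0 = {0} := by ext x; simp [le_antisymm_iff, and_comm]
    rw [this]
    simp
  have haeF : ∀ᵐ ω ∂μ, 0 < XF ω := by
    rw [ae_iff]
    have : {ω | ¬ 0 < XF ω} = XF ⁻¹' (Iic 0) := by ext ω; simp
    rw [this, hdF _ measurableSet_Iic]
    have : Iic (0:ℝ) ∩ Ici 0 = {0} := by ext x; simp [le_antisymm_iff, and_comm]
    rw [this]
    simp
  -- rewrite the event
  have hiff : ∀ x y : ℝ, 0 < x → 0 < y → (y ^ (-α) ≥ c * x ^ (-α) ↔ y ≤ k * x) := by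
    intro x y hx hy
    have hkx : c * x ^ (-α) = (k * x) ^ (-α) := by
      rw [Real.mul_rpow hk0.le hx.le, hk, ← Real.rpow_mul hc0.le,
        show -α⁻¹ * -α = 1 by field_simp, Real.rpow_one]
    rw [hkx, ge_iff_le, Real.rpow_le_rpow_iff_of_neg (by positivity) hy (by linarith)]
  have hseteq : μ {ω | XF ω ^ (-α) ≥ c * XM ω ^ (-α)}
      = μ {ω | 0 < XM ω ∧ 0 < XF ω ∧ XF ω ≤ k * XM ω} := by
    apply measure_congr
    rw [Filter.eventuallyEq_set]
    filter_upwards [haeM, haeF] with ω h1 h2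
    show XF ω ^ (-α) ≥ c * XM ω ^ (-α) ↔ 0 < XM ω ∧ 0 < XF ω ∧ XF ω ≤ k * XM ω
    rw [hiff _ _ h1 h2]
    tauto
  rw [hseteq]
  -- use independence
  have hprod := (ProbabilityTheory.indepFun_iff_map_prod_eq_prod_map_map
    hXM.aemeasurable hXF.aemeasurable).1 hind
  set S : Set (ℝ × ℝ) := {p : ℝ × ℝ | 0 < p.1 ∧ 0 < p.2 ∧ p.2 ≤ k * p.1} with hS
  have hSm : MeasurableSet S := by
    apply MeasurableSet.inter
    · exact measurableSet_lt measurable_const measurable_fst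
    apply MeasurableSet.inter
    · exact measurableSet_lt measurable_const measurable_snd
    · exact measurableSet_le measurable_snd (measurable_fst.const_mul k)
  have hpre : {ω | 0 < XM ω ∧ 0 < XF ω ∧ XF ω ≤ k * XM ω}
      = (fun ω => (XM ω, XF ω)) ⁻¹' S := rfl
  rw [hpre, ← Measure.map_apply (hXM.prodMk hXF) hSm, hprod]
  haveI : IsProbabilityMeasure (Measure.map XF μ) := Measure.isProbabilityMeasure_map hXF.aemeasurable
  haveI : IsProbabilityMeasure (Measure.map XM μ) := Measure.isProbabilityMeasure_map hXM.aemeasurable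
  rw [Measure.prod_apply hSm]
  -- inner measure
  have hinner : ∀ x : ℝ, (Measure.map XF μ) (Prod.mk x ⁻¹' S)
      = (Ioi (0:ℝ)).indicator
          (fun x => ENNReal.ofReal (1 - Real.exp (-(π * lF * (k * x) ^ 2)))) x := by
    intro x
    by_cases hx : (0:ℝ) < x
    · have h1 : Prod.mk x ⁻¹' S = Ioc 0 (k * x) := by
        ext y; simp [hS, hx, and_comm, Ioc]
      rw [h1, Measure.map_apply hXF measurableSet_Ioc, hdF _ measurableSet_Ioc]
      have h2 : Ioc (0:ℝ) (k * x) ∩ Ici 0 = Ioc 0 (k * x) := by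
        apply inter_eq_left.2; intro y hy; exact le_of_lt hy.1
      rw [h2, auxf_intIoc _ (by positivity)]
      simp [hx]
    · have h1 : Prod.mk x ⁻¹' S = ∅ := by
        ext y; simp [hS, hx]
      rw [h1]
      simp [hx]
  simp_rw [hinner]
  -- express outer as density integral
  rw [law_eq μ XM hXM hlM hdM,
    lintegral_withDensity_eq_lintegral_mul _
      (Measurable.ennreal_ofReal ((auxf_meas lM).indicator measurableSet_Ioi))
      (Measurable.indicator (Measurable.ennreal_ofReal
        (aux_cont2 (π * lF) k).measurable) measurableSet_Ioi)]
  set fM : ℝ → ℝ := fun x => 2 * π * lM * x * Real.exp (-(π * lM * x ^ 2)) with hfM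
  set g : ℝ → ℝ := fun x => fM x * (1 - Real.exp (-(π * lF * (k * x) ^ 2))) with hg
  have hpt : ∀ x : ℝ,
      ((fun x => ENNReal.ofReal ((Ioi (0:ℝ)).indicator fM x)) *
        (Ioi (0:ℝ)).indicator (fun x => ENNReal.ofReal (1 - Real.exp (-(π * lF * (k * x) ^ 2))))) x
      = (Ioi (0:ℝ)).indicator (fun x => ENNReal.ofReal (g x)) x := by
    intro x
    by_cases hx : x ∈ Ioi (0:ℝ)
    · have hx0 : (0:ℝ) < x := hx
      simp only [Pi.mul_apply, indicator_of_mem hx]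
      rw [← ENNReal.ofReal_mul (by positivity)]
    · simp [indicator_of_notMem hx]
  simp_rw [hpt]
  rw [lintegral_indicator measurableSet_Ioi]
  -- the positive combined rate
  set l' : ℝ := lM + lF * k ^ 2 with hl'
  have hl'0 : 0 < l' := by positivity
  have hgeq : ∀ x : ℝ, g x = fM x - (lM / l') * (2 * π * l' * x * Real.exp (-(π * l' * x ^ 2))) := by
    intro x
    have hexp : Real.exp (-(π * l' * x ^ 2))
        = Real.exp (-(π * lM * x ^ 2)) * Real.exp (-(π * lF * (k * x) ^ 2)) := by
      rw [← Real.exp_add]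
      congr 1
      rw [hl']
      ring
    rw [hg, hfM, hexp]
    field_simp
  have hgint : IntegrableOn g (Ioi 0) := by
    have : IntegrableOn (fun x => fM x - (lM / l') * (2 * π * l' * x * Real.exp (-(π * l' * x ^ 2)))) (Ioi 0) :=
      (auxf_intOn hlM).sub ((auxf_intOn hl'0).const_mul (lM / l'))
    exact this.congr_fun (fun x _ => (hgeq x).symm) measurableSet_Ioi
  have hgnn : 0 ≤ᵐ[MeasureTheory.volume.restrict (Ioi (0:ℝ))] g := by
    filter_upwards [ae_restrict_mem measurableSet_Ioi] with x hx
    have hx0 : (0:ℝ) < x := hx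
    have h1 : Real.exp (-(π * lF * (k * x) ^ 2)) ≤ 1 := by
      rw [Real.exp_le_one_iff]
      have : (0:ℝ) ≤ π * lF * (k * x) ^ 2 := by positivity
      linarith
    have h2 : (0:ℝ) ≤ fM x := by rw [hfM]; positivity
    have h3 : (0:ℝ) ≤ 1 - Real.exp (-(π * lF * (k * x) ^ 2)) := by linarith
    exact mul_nonneg h2 h3
  rw [← ofReal_integral_eq_lintegral_ofReal hgint hgnn]
  have hintval : ∫ x in Ioi (0:ℝ), g x = 1 - lM / l' := by
    rw [setIntegral_congr_fun measurableSet_Ioi (fun x _ => hgeq x)]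
    rw [integral_sub (auxf_intOn hlM) ((auxf_intOn hl'0).const_mul (lM / l')),
      integral_const_mul, auxf_intIoi hlM, auxf_intIoi hl'0]
    ring
  rw [hintval]
  congr 1
  -- arithmetic
  have hq0 : (0:ℝ) < c ^ (2 / α) := Real.rpow_pos_of_pos hc0 _
  have hk2 : k ^ 2 = (c ^ (2 / α))⁻¹ := by
    rw [hk, ← Real.rpow_natCast (c ^ (-α⁻¹)) 2, ← Real.rpow_mul hc0.le,
      ← Real.rpow_neg_one (c ^ (2 / α)), ← Real.rpow_mul hc0.le]
    congr 1
    push_cast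
    ring
  rw [hl', hk2]
  have h1 : lM + lF * (c ^ (2 / α))⁻¹ ≠ 0 := by positivity
  have h2 : lF + c ^ (2 / α) * lM ≠ 0 := by positivity
  field_simp
  ring_nf
end

section
/- Fix λ_M > 0 and c > 1, and define g(λ_F) = λ_F/(λ_F+λ_M) − λ_F/(λ_F + c λ_M) for λ_F ≥ 0 (the decoupled-access probability). Then g(0) = 0, g(λ_F) → 0 as λ_F → ∞, g(λ_F) > 0 for all λ_F > 0, and g attains its maximum at λ_F = √c · λ_M with maximum value (√c − 1)/(√c + 1). -/
open Filter Real

lemma aux_tendsto_s5 (a : ℝ) : Tendsto (fun x : ℝ => x / (x + a)) atTop (nhds 1) := by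
  have h1 : Tendsto (fun x : ℝ => x + a) atTop atTop :=
    tendsto_atTop_add_const_right _ a tendsto_id
  have h2 : Tendsto (fun x : ℝ => a / (x + a)) atTop (nhds 0) :=
    Tendsto.div_atTop tendsto_const_nhds h1
  have h3 : Tendsto (fun x : ℝ => 1 - a / (x + a)) atTop (nhds (1 - 0)) :=
    tendsto_const_nhds.sub h2
  rw [sub_zero] at h3
  apply h3.congr'
  filter_upwards [eventually_gt_atTop (max 0 (-a))] with x hx
  have hxa : x + a ≠ 0 := by
    have := lt_of_le_of_lt (le_max_right 0 (-a)) hx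
    intro h; nlinarith
  field_simp
  ring

theorem stmt_5 (lM c : ℝ) (hlM : 0 < lM) (hc : 1 < c)
    (g : ℝ → ℝ) (hg : ∀ lF, g lF = lF / (lF + lM) - lF / (lF + c * lM)) :
    g 0 = 0 ∧
    Tendsto g atTop (nhds 0) ∧
    (∀ lF > 0, 0 < g lF) ∧
    (∀ lF ≥ 0, g lF ≤ g (Real.sqrt c * lM)) ∧
    g (Real.sqrt c * lM) = (Real.sqrt c - 1) / (Real.sqrt c + 1) := by
  have hc0 : (0:ℝ) < c := lt_trans one_pos hc
  set s := Real.sqrt c with hs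
  have hs2 : s ^ 2 = c := Real.sq_sqrt hc0.le
  have hs1 : 1 < s := by
    rw [hs, show (1:ℝ) = Real.sqrt 1 by simp]
    exact Real.sqrt_lt_sqrt (by norm_num) hc
  have hs0 : 0 < s := lt_trans one_pos hs1
  have hgs : g (s * lM) = (s - 1) / (s + 1) := by
    rw [hg]
    have d1 : s * lM + lM ≠ 0 := by positivity
    have d2 : s * lM + c * lM ≠ 0 := by positivity
    have d3 : s + 1 ≠ 0 := by positivity
    rw [← hs2]
    field_simp
    ring
  refine ⟨by simp [hg], ?_, ?_, ?_, hgs⟩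
  · have := (aux_tendsto_s5 lM).sub (aux_tendsto_s5 (c * lM))
    rw [sub_self] at this
    exact this.congr (fun x => (hg x).symm)
  · intro lF hlF
    rw [hg]
    have d1 : 0 < lF + lM := by linarith
    have d2 : 0 < lF + c * lM := by nlinarith
    have hlt : lF / (lF + c * lM) < lF / (lF + lM) :=
      div_lt_div_of_pos_left hlF d1 (by nlinarith)
    linarith
  · intro lF hlF
    rw [hg, hgs]
    have d1 : 0 < lF + lM := by linarith
    have d2 : 0 < lF + c * lM := by nlinarith
    have d3 : (0:ℝ) < s + 1 := by linarith
    rw [div_sub_div _ _ d1.ne' d2.ne', div_le_div_iff₀ (by positivity) d3, ← hs2]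
    nlinarith [mul_nonneg (sub_nonneg.2 hs1.le) (sq_nonneg (lF - s * lM))]
end

section
/- Let α > 2 and define κ(γ) = γ^{2/α} ∫_{γ^{-2/α}}^∞ du/(1+u^{α/2}) for γ > 0. Then κ is strictly increasing in γ, κ(γ) → 0 as γ → 0⁺, and κ(γ) → ∞ as γ → ∞. -/
open MeasureTheory Real Set Filter Topology

private lemma pen_meas (α : ℝ) : Measurable (fun u : ℝ => 1 / (1 + u ^ (α / 2))) :=
  measurable_const.div (measurable_const.add (measurable_id.pow_const (α/2)))

private lemma pen_pos (α : ℝ) {u : ℝ} (hu : 0 < u) : 0 < 1 / (1 + u ^ (α / 2)) := by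
  have h := Real.rpow_pos_of_pos hu (α / 2)
  positivity

private lemma pen_integrable (α : ℝ) (hα : 2 < α) :
    IntegrableOn (fun u : ℝ => 1 / (1 + u ^ (α / 2))) (Ioi 0) := by
  have h1 : IntegrableOn (fun u : ℝ => 1 / (1 + u ^ (α / 2))) (Ioc 0 1) := by
    apply Measure.integrableOn_of_bounded (M := 1)
    · exact (measure_Ioc_lt_top).ne
    · exact (pen_meas α).aestronglyMeasurable
    · filter_upwards [ae_restrict_mem measurableSet_Ioc] with u hu
      have h := Real.rpow_pos_of_pos hu.1 (α / 2)
      rw [Real.norm_eq_abs, abs_of_pos (pen_pos α hu.1), div_le_one (by linarith)]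
      linarith
  have h2 : IntegrableOn (fun u : ℝ => 1 / (1 + u ^ (α / 2))) (Ioi 1) := by
    have hbase : IntegrableOn (fun u : ℝ => u ^ (-(α/2))) (Ioi 1) (volume) :=
      integrableOn_Ioi_rpow_of_lt (by linarith) one_pos
    apply Integrable.mono' hbase ((pen_meas α).aestronglyMeasurable)
    filter_upwards [ae_restrict_mem measurableSet_Ioi] with u hu
    have hu0 : 0 < u := lt_trans one_pos hu
    have h := Real.rpow_pos_of_pos hu0 (α / 2)
    rw [Real.norm_eq_abs, abs_of_pos (pen_pos α hu0), Real.rpow_neg hu0.le, ← one_div]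
    exact one_div_le_one_div_of_le h (by linarith)
  have h := h1.union h2
  rwa [Ioc_union_Ioi_eq_Ioi zero_le_one] at h

private lemma pen_int_mono (α : ℝ) (hα : 2 < α) {a b : ℝ} (ha : 0 ≤ a) (hab : a ≤ b) :
    ∫ u in Ioi b, 1 / (1 + u ^ (α / 2)) ≤ ∫ u in Ioi a, 1 / (1 + u ^ (α / 2)) := by
  apply setIntegral_mono_set ((pen_integrable α hα).mono_set (Ioi_subset_Ioi ha))
  · refine (ae_restrict_iff' measurableSet_Ioi).2 (ae_of_all _ fun u hu => ?_)
    exact (pen_pos α (ha.trans_lt hu)).le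
  · exact HasSubset.Subset.eventuallyLE (Ioi_subset_Ioi hab)

private lemma pen_int_pos (α : ℝ) (hα : 2 < α) {a : ℝ} (ha : 0 ≤ a) :
    0 < ∫ u in Ioi a, 1 / (1 + u ^ (α / 2)) := by
  have hint : IntegrableOn (fun u : ℝ => 1 / (1 + u ^ (α / 2))) (Ioi a) := by
    rcases eq_or_lt_of_le ha with h | h
    · rw [← h]; exact pen_integrable α hα
    · exact (pen_integrable α hα).mono_set (Ioi_subset_Ioi h.le)
  rw [setIntegral_pos_iff_support_of_nonneg_ae ?_ hint]
  · refine lt_of_lt_of_le ?_ (measure_mono (show Ioi (a+1) ⊆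
      Function.support (fun u : ℝ => 1 / (1 + u ^ (α / 2))) ∩ Ioi a from fun u hu =>
        ⟨(pen_pos α (lt_of_le_of_lt (by linarith) hu)).ne', lt_of_le_of_lt (show a ≤ a + 1 by linarith) hu⟩))
    simp [Real.volume_Ioi]
  · refine (ae_restrict_iff' measurableSet_Ioi).2 (ae_of_all _ fun u hu => ?_)
    exact (pen_pos α (lt_of_le_of_lt ha hu)).le

theorem stmt_19 (α : ℝ) (hα : 2 < α)
    (κ : ℝ → ℝ)
    (hκ : ∀ γ > (0 : ℝ), κ γ = γ ^ (2 / α) * ∫ u in Ioi (γ ^ (-(2 / α))), 1 / (1 + u ^ (α / 2))) :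
    StrictMonoOn κ (Ioi 0) ∧
    Tendsto κ (nhdsWithin 0 (Ioi 0)) (nhds 0) ∧
    Tendsto κ atTop atTop := by
  have hα0 : 0 < α := by linarith
  have hexp : 0 < 2 / α := by positivity
  refine ⟨?_, ?_, ?_⟩
  · -- strict mono
    intro x hx y hy hxy
    rw [mem_Ioi] at hx hy
    rw [hκ x hx, hκ y hy]
    have ht : x ^ (2 / α) < y ^ (2 / α) := Real.rpow_lt_rpow hx.le hxy hexp
    have hx1 : 0 < x ^ (-(2 / α)) := Real.rpow_pos_of_pos hx _
    have hy1 : 0 < y ^ (-(2 / α)) := Real.rpow_pos_of_pos hy _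
    have hle : y ^ (-(2 / α)) ≤ x ^ (-(2 / α)) := by
      rw [Real.rpow_neg hx.le, Real.rpow_neg hy.le]
      exact inv_anti₀ (Real.rpow_pos_of_pos hx _) (Real.rpow_le_rpow hx.le hxy.le hexp.le)
    exact mul_lt_mul ht (pen_int_mono α hα hy1.le hle) (pen_int_pos α hα hx1.le)
      (Real.rpow_nonneg hy.le _)
  · -- limit at 0
    set C := ∫ u in Ioi (0:ℝ), 1 / (1 + u ^ (α / 2)) with hC
    have hCpos : 0 < C := pen_int_pos α hα le_rfl
    have hup : Tendsto (fun γ : ℝ => γ ^ (2 / α) * C) (𝓝[>] 0) (𝓝 0) := by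
      have hc : ContinuousAt (fun γ : ℝ => γ ^ (2 / α)) 0 :=
        Real.continuousAt_rpow_const 0 (2 / α) (Or.inr hexp.le)
      have := (hc.tendsto.mono_left (nhdsWithin_le_nhds (s := Ioi (0:ℝ)))).mul_const C
      simpa [Real.zero_rpow hexp.ne'] using this
    refine tendsto_of_tendsto_of_tendsto_of_le_of_le' tendsto_const_nhds hup ?_ ?_
    · filter_upwards [self_mem_nhdsWithin] with γ hγ
      rw [mem_Ioi] at hγ
      rw [hκ γ hγ]
      exact mul_nonneg (Real.rpow_nonneg hγ.le _)
        (pen_int_pos α hα (Real.rpow_pos_of_pos hγ _).le).le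
    · filter_upwards [self_mem_nhdsWithin] with γ hγ
      rw [mem_Ioi] at hγ
      rw [hκ γ hγ]
      refine mul_le_mul_of_nonneg_left ?_ (Real.rpow_nonneg hγ.le _)
      exact pen_int_mono α hα le_rfl (Real.rpow_pos_of_pos hγ _).le
  · -- limit at ∞
    have hIpos : 0 < ∫ u in Ioi (1:ℝ), 1 / (1 + u ^ (α / 2)) := pen_int_pos α hα zero_le_one
    have hmain : Tendsto (fun γ : ℝ => γ ^ (2 / α) * ∫ u in Ioi (1:ℝ), 1 / (1 + u ^ (α / 2)))
        atTop atTop := (tendsto_rpow_atTop hexp).atTop_mul_const hIpos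
    refine tendsto_atTop_mono' atTop ?_ hmain
    filter_upwards [eventually_ge_atTop (1:ℝ)] with γ hγ
    have hγ0 : (0:ℝ) < γ := lt_of_lt_of_le one_pos hγ
    rw [hκ γ hγ0]
    refine mul_le_mul_of_nonneg_left ?_ (Real.rpow_nonneg hγ0.le _)
    refine pen_int_mono α hα (Real.rpow_pos_of_pos hγ0 _).le ?_
    exact Real.rpow_le_one_of_one_le_of_nonpos hγ (by linarith [hexp])
end
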